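/- log( det(Σ̃_t) / (λ η^{−2t})^d ) ≤ d · log( 1 + (1 − η^{2t}) / (λ d (1 − η²)) ). -/

import Mathlib

open Finset Matrix

lemma psd_vmv {d : ℕ} (v : Fin d → ℝ) : (Matrix.vecMulVec v v).PosSemidef := by
  rw [Matrix.vecMulVec_eq (Fin 1)]
  have h : Matrix.replicateCol (Fin 1) v = (Matrix.replicateRow (Fin 1) v)ᴴ := by
    rw [Matrix.conjTranspose_replicateRow, star_trivial]
  rw [h]
  exact Matrix.posSemidef_conjTranspose_mul_self _

lemma psd_smul {d : ℕ} {A : Matrix (Fin d) (Fin d) ℝ} (hA : A.PosSemidef) {c : ℝ}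
    (hc : 0 ≤ c) : (c • A).PosSemidef := by
  refine ⟨?_, fun x => ?_⟩
  · ext i j
    simp only [Matrix.conjTranspose_apply, Matrix.smul_apply, star_trivial, smul_eq_mul]
    rw [show A j i = A i j from by simpa using hA.1.apply i j]
  · exact (hA.smul hc).2 x

lemma pd_smul {d : ℕ} {A : Matrix (Fin d) (Fin d) ℝ} (hA : A.PosDef) {c : ℝ}
    (hc : 0 < c) : (c • A).PosDef := by
  refine ⟨?_, fun x hx => ?_⟩
  · ext i j
    simp only [Matrix.conjTranspose_apply, Matrix.smul_apply, star_trivial, smul_eq_mul]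
    rw [show A j i = A i j from by simpa using hA.1.apply i j]
  · exact (hA.smul hc).2 hx

lemma psd_sum {d : ℕ} {s : Finset ℕ} {f : ℕ → Matrix (Fin d) (Fin d) ℝ}
    (h : ∀ i ∈ s, (f i).PosSemidef) : (∑ i ∈ s, f i).PosSemidef := by
  classical
  induction s using Finset.induction_on with
  | empty => exact ⟨by simp [Matrix.IsHermitian], fun x => by simp⟩
  | insert a s hx ih =>
    rw [Finset.sum_insert hx]
    exact (h _ (Finset.mem_insert_self _ _)).add
      (ih fun i hi => h i (Finset.mem_insert_of_mem hi))

lemma trace_eq_sum_eigs {d : ℕ} {A : Matrix (Fin d) (Fin d) ℝ} (hA : A.IsHermitian) :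
    A.trace = ∑ i, hA.eigenvalues i := by
  rw [hA.trace_eq_sum_eigenvalues]
  simp

lemma trace_vmv {d : ℕ} (v : Fin d → ℝ) :
    (Matrix.vecMulVec v v).trace = ∑ i, v i * v i := by
  simp [Matrix.trace, Matrix.diag, Matrix.vecMulVec_apply]


/-- `Σ̃_t = ∑_{τ=1}^{t} η^{-2τ} φ_τ φ_τᵀ + λ η^{-2t} I`. -/
noncomputable def gramMatrixSq' (d : ℕ) (η lam : ℝ) (t : ℕ)
    (φ : ℕ → EuclideanSpace ℝ (Fin d)) : Matrix (Fin d) (Fin d) ℝ :=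
  ∑ τ ∈ Finset.Icc 1 t, η ^ (-2 * (τ : ℤ)) • Matrix.vecMulVec (φ τ) (φ τ)
    + (lam * η ^ (-2 * (t : ℤ))) • (1 : Matrix (Fin d) (Fin d) ℝ)

/-- `log(det(Σ̃_t) / (λ η^{−2t})^d) ≤ d log(1 + (1 − η^{2t}) / (λ d (1 − η²)))`. -/
theorem stmt_7 (d : ℕ) (hd : 1 ≤ d) (η lam : ℝ) (hη : η ∈ Set.Ioo (0 : ℝ) 1)
    (hlam : 0 < lam) (t : ℕ) (ht : 1 ≤ t)
    (φ : ℕ → EuclideanSpace ℝ (Fin d)) (hφ : ∀ τ ∈ Finset.Icc 1 t, ‖φ τ‖ ≤ 1) :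
    Real.log ((gramMatrixSq' d η lam t φ).det / (lam * η ^ (-2 * (t : ℤ))) ^ d)
      ≤ d * Real.log (1 + (1 - η ^ (2 * t)) / (lam * d * (1 - η ^ 2))) := by
  obtain ⟨hη0, hη1⟩ := hη
  have hd0 : (0:ℝ) < d := by exact_mod_cast hd
  have hη2 : (0:ℝ) < η ^ 2 := by positivity
  have hη2lt : η ^ 2 < 1 := by nlinarith
  have h1mη2 : (0:ℝ) < 1 - η ^ 2 := by linarith
  set r : ℝ := (η ^ 2)⁻¹ with hrdef
  have hr0 : 0 < r := by positivity
  have hr1 : (1:ℝ) < r := (one_lt_inv₀ hη2).mpr hη2lt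
  have hzpow : ∀ τ : ℕ, η ^ (-2 * (τ : ℤ)) = r ^ τ := by
    intro τ
    rw [show (-2 * (τ:ℤ)) = -((2*τ : ℕ) : ℤ) by push_cast; ring, _root_.zpow_neg, zpow_natCast,
      pow_mul, hrdef, inv_pow]
  set c : ℝ := lam * η ^ (-2 * (t : ℤ)) with hcdef
  have hc : 0 < c := mul_pos hlam (zpow_pos hη0 _)
  set A := gramMatrixSq' d η lam t φ with hAdef
  have hA : A.PosDef := by
    rw [hAdef]
    exact Matrix.PosDef.posSemidef_add
      (psd_sum fun τ _ => psd_smul (psd_vmv _) (zpow_pos hη0 _).le)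
      (pd_smul Matrix.PosDef.one hc)
  have hherm : A.IsHermitian := hA.1
  set μ : Fin d → ℝ := hherm.eigenvalues with hμdef
  have hμ : ∀ i, 0 < μ i := fun i => hA.eigenvalues_pos i
  have hdet : A.det = ∏ i, μ i := by
    rw [hherm.det_eq_prod_eigenvalues]
    norm_num
    rfl
  have htr : A.trace = (∑ τ ∈ Finset.Icc 1 t, r ^ τ * (∑ i, φ τ i * φ τ i)) + c * d := by
    rw [hAdef]
    show (gramMatrixSq' d η lam t φ).trace = _
    unfold gramMatrixSq'
    rw [Matrix.trace_add, Matrix.trace_sum, Matrix.trace_smul, Matrix.trace_one]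
    simp only [Matrix.trace_smul, trace_vmv, smul_eq_mul, hzpow]
    rw [Fintype.card_fin, hcdef, hzpow t]
  set B : ℝ := 1 + (1 - η ^ (2 * t)) / (lam * d * (1 - η ^ 2)) with hBdef
  have hηt1 : η ^ (2 * t) ≤ 1 := pow_le_one₀ hη0.le hη1.le
  have hB1 : (1:ℝ) ≤ B := by
    rw [hBdef]
    have : 0 ≤ (1 - η ^ (2 * t)) / (lam * d * (1 - η ^ 2)) :=
      div_nonneg (by linarith) (by positivity)
    linarith
  have hrtη : r ^ t * η ^ (2 * t) = 1 := by
    rw [hrdef, pow_mul, inv_pow, inv_mul_cancel₀ (by positivity)]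
  have hS : ∑ τ ∈ Finset.Icc 1 t, r ^ τ = (r ^ t - 1) / (1 - η ^ 2) := by
    rw [← Finset.Ico_add_one_right_eq_Icc, geom_sum_Ico hr1.ne' (by omega), pow_succ, pow_one]
    rw [div_eq_div_iff (by linarith) (by linarith)]
    have : r * (η ^ 2) = 1 := by rw [hrdef, inv_mul_cancel₀ hη2.ne']
    linear_combination (1 - r ^ t) * this
  have hT : A.trace ≤ d * (c * B) := by
    have h1 : ∑ τ ∈ Finset.Icc 1 t, r ^ τ * (∑ i, φ τ i * φ τ i)
        ≤ ∑ τ ∈ Finset.Icc 1 t, r ^ τ := by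
      apply Finset.sum_le_sum
      intro τ hτ
      have hw : ∑ i, φ τ i * φ τ i ≤ 1 := by
        have h2 : ∑ i, φ τ i * φ τ i = ‖φ τ‖ ^ 2 := by
          rw [EuclideanSpace.norm_eq, Real.sq_sqrt (Finset.sum_nonneg fun i _ => sq_nonneg _)]
          simp [sq]
        rw [h2]
        nlinarith [hφ τ hτ, norm_nonneg (φ τ)]
      calc r ^ τ * (∑ i, φ τ i * φ τ i) ≤ r ^ τ * 1 :=
            mul_le_mul_of_nonneg_left hw (pow_pos hr0 τ).le
        _ = r ^ τ := mul_one _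
    have h2 : d * (c * B) = c * d + (r ^ t - 1) / (1 - η ^ 2) := by
      rw [hBdef, hcdef, hzpow t]
      field_simp
      have hX : η ^ (t * 2) * η⁻¹ ^ (t * 2) = 1 := by
        rw [← mul_pow, mul_inv_cancel₀ hη0.ne', one_pow]
      linear_combination (-1 : ℝ) * hX
    rw [htr, h2]
    linarith [hS ▸ h1]
  have hsum_eigs : ∑ i, μ i = A.trace := (trace_eq_sum_eigs hherm).symm
  have hTpos : 0 < A.trace := by
    rw [← hsum_eigs]
    exact Finset.sum_pos (fun i _ => hμ i) ⟨⟨0, hd⟩, Finset.mem_univ _⟩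
  have hcd : (0:ℝ) < d * c := mul_pos hd0 hc
  have key : Real.log (A.det / c ^ d) = ∑ i, Real.log (μ i / c) := by
    rw [hdet, show (c:ℝ) ^ d = ∏ _i : Fin d, c by simp, ← Finset.prod_div_distrib,
      Real.log_prod]
    intro i _
    exact (div_pos (hμ i) hc).ne'
  have jensen : ∑ i, (1/(d:ℝ)) • Real.log (μ i / c)
      ≤ Real.log (∑ i : Fin d, (1/(d:ℝ)) • (μ i / c)) := by
    apply (strictConcaveOn_log_Ioi.concaveOn).le_map_sum
    · intro i _; positivity
    · simp only [Finset.sum_const, Finset.card_fin, nsmul_eq_mul]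
      field_simp
    · intro i _
      exact Set.mem_Ioi.mpr (div_pos (hμ i) hc)
  have hsum' : ∑ i : Fin d, (1/(d:ℝ)) • (μ i / c) = A.trace / (d * c) := by
    rw [← hsum_eigs, Finset.sum_div]
    apply Finset.sum_congr rfl
    intro i _
    rw [smul_eq_mul]
    field_simp
  calc Real.log (A.det / c ^ d) = ∑ i, Real.log (μ i / c) := key
    _ = d * ∑ i, (1/(d:ℝ)) • Real.log (μ i / c) := by
        rw [← Finset.smul_sum, smul_eq_mul, ← mul_assoc]
        field_simp
    _ ≤ d * Real.log (A.trace / (d * c)) := by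
        rw [← hsum']
        exact mul_le_mul_of_nonneg_left jensen hd0.le
    _ ≤ d * Real.log B := by
        apply mul_le_mul_of_nonneg_left _ hd0.le
        apply Real.log_le_log (div_pos hTpos hcd)
        rw [div_le_iff₀ hcd]
        calc A.trace ≤ d * (c * B) := hT
          _ = B * (d * c) := by ring
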